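/- Let C_k = x_1 x_2 … x_k x_1 (k ≥ 2) be a non-Hamiltonian cycle in a digraph D, and let Q = y_1 y_2 … y_r (r ≥ 1) be a path in D − V(C_k). If d^-(y_1, C_k) + d^+(y_r, C_k) ≥ k+1, then for every m with r+1 ≤ m ≤ k+r, D contains a cycle C_m of length m with vertex set contained in V(C_k) ∪ V(Q). -/

import Mathlib

open Finset

/-- A list of distinct vertices whose consecutive members are joined by arcs. -/
def IsPathList {V : Type*} (A : V → V → Prop) (p : List V) : Prop :=
  p.Nodup ∧ p.Chain' A

/-- A directed cycle: at least two distinct vertices, consecutive arcs, and an arc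
from the last vertex back to the first. -/
def IsCycleList {V : Type*} (A : V → V → Prop) (c : List V) : Prop :=
  2 ≤ c.length ∧ c.Nodup ∧ c.Chain' A ∧ ∀ h : c ≠ [], A (c.getLast h) (c.head h)

/-- A Hamiltonian bypass: a Hamiltonian path `v₁ v₂ … vₙ` together with the arc `v₁ vₙ`. -/
def HasHamBypass {V : Type*} (A : V → V → Prop) : Prop :=
  ∃ l : List V, l.Nodup ∧ (∀ v, v ∈ l) ∧ l.Chain' A ∧
    ∀ h : l ≠ [], A (l.head h) (l.getLast h)

/-- A Hamiltonian cycle. -/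
def HasHamCycle {V : Type*} (A : V → V → Prop) : Prop :=
  ∃ c : List V, IsCycleList A c ∧ ∀ v, v ∈ c

/-- out-degree of `x` towards a set `S`. -/
def outDegOn {V : Type*} [DecidableEq V] (A : V → V → Prop) [DecidableRel A]
    (x : V) (S : Finset V) : ℕ := (S.filter fun y => A x y).card

/-- in-degree of `x` from a set `S`. -/
def inDegOn {V : Type*} [DecidableEq V] (A : V → V → Prop) [DecidableRel A]
    (x : V) (S : Finset V) : ℕ := (S.filter fun y => A y x).card

/-- degree of `x` with respect to a set `S` (arcs in both directions). -/
def degOn {V : Type*} [DecidableEq V] (A : V → V → Prop) [DecidableRel A]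
    (x : V) (S : Finset V) : ℕ := outDegOn A x S + inDegOn A x S

/-- out-degree of `x`. -/
def outDeg {V : Type*} [Fintype V] [DecidableEq V] (A : V → V → Prop) [DecidableRel A]
    (x : V) : ℕ := outDegOn A x Finset.univ

/-- in-degree of `x`. -/
def inDeg {V : Type*} [Fintype V] [DecidableEq V] (A : V → V → Prop) [DecidableRel A]
    (x : V) : ℕ := inDegOn A x Finset.univ

/-- degree of `x`. -/
def deg {V : Type*} [Fintype V] [DecidableEq V] (A : V → V → Prop) [DecidableRel A]
    (x : V) : ℕ := outDeg A x + inDeg A x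

/-- The condition `A_k` of Manoussakis: for every triple of distinct vertices `x, y, z`
with `x` and `y` non-adjacent, if `xz` is not an arc then
`d(x)+d(y)+d⁺(x)+d⁻(z) ≥ 3n-2+k`, and if `zx` is not an arc then
`d(x)+d(y)+d⁻(x)+d⁺(z) ≥ 3n-2+k`. -/
def CondA {V : Type*} [Fintype V] [DecidableEq V] (A : V → V → Prop) [DecidableRel A]
    (k : ℤ) : Prop :=
  ∀ x y z : V, x ≠ y → z ≠ x → z ≠ y → ¬A x y → ¬A y x →
    (¬A x z → (deg A x + deg A y + outDeg A x + inDeg A z : ℤ) ≥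
      3 * (Fintype.card V : ℤ) - 2 + k) ∧
    (¬A z x → (deg A x + deg A y + inDeg A x + outDeg A z : ℤ) ≥
      3 * (Fintype.card V : ℤ) - 2 + k)

open Fin.NatCast

/-- Lemma 3. -/
theorem stmt3 {V : Type*} [Fintype V] [DecidableEq V] (A : V → V → Prop) [DecidableRel A]
    (hirr : ∀ v, ¬A v v)
    (c : List V) (hc : IsCycleList A c) (hnonham : ∃ v, v ∉ c)
    (q : List V) (hq : IsPathList A q) (hr : 1 ≤ q.length)
    (hdisj : ∀ v ∈ q, v ∉ c)
    (hd : ∀ h : q ≠ [],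
      c.length + 1 ≤ inDegOn A (q.head h) c.toFinset + outDegOn A (q.getLast h) c.toFinset) :
    ∀ m, q.length + 1 ≤ m → m ≤ c.length + q.length →
      ∃ c' : List V, IsCycleList A c' ∧ c'.length = m ∧
        c'.toFinset ⊆ c.toFinset ∪ q.toFinset := by
  obtain ⟨hk2, hcnd, hcch, hclast⟩ := hc
  obtain ⟨hqnd, hqch⟩ := hq
  have hqne : q ≠ [] := by
    cases q with
    | nil => simp at hr
    | cons a l => simp
  intro m hm1 hm2
  set k := c.length with hkdef
  haveI : NeZero k := ⟨by omega⟩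
  set y1 := q.head hqne with hy1
  set yr := q.getLast hqne with hyr
  have hcne : c ≠ [] := List.ne_nil_of_length_pos (by omega)
  have hval1 : ((1 : Fin k) : ℕ) = 1 % k := Fin.val_one' k
  -- arcs along the cycle, cyclically
  have harc : ∀ i : Fin k, A (c.get i) (c.get (i + 1)) := by
    intro i
    have hvadd : ((i + 1 : Fin k) : ℕ) = (i.val + 1) % k := by
      rw [Fin.val_add, hval1, Nat.add_mod_mod]
    by_cases hlt : i.val + 1 < k
    · have hv : ((i + 1 : Fin k) : ℕ) = i.val + 1 := by
        rw [hvadd, Nat.mod_eq_of_lt hlt]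
      have h := List.isChain_iff_getElem.mp hcch i.val (by omega)
      have e2 : c.get (i + 1) = c.get ⟨i.val + 1, by omega⟩ := congrArg c.get (Fin.ext hv)
      rw [e2]
      exact h
    · have hieq : i.val = k - 1 := by have := i.isLt; omega
      have hv : ((i + 1 : Fin k) : ℕ) = 0 := by
        rw [hvadd, hieq]
        have : k - 1 + 1 = k := by omega
        rw [this, Nat.mod_self]
      have h1 : c.get i = c.getLast hcne := by
        rw [List.getLast_eq_getElem]
        exact congrArg c.get (Fin.ext hieq)
      have h2 : c.get (i + 1) = c.head hcne := by
        have e : c.get (i+1) = c.get ⟨0, by omega⟩ := congrArg c.get (Fin.ext hv)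
        rw [e, List.get_mk_zero]
      rw [h1, h2]
      exact hclast hcne
  -- counting: degrees on the cycle equal counts of indices
  have hcount : ∀ (P : V → Prop) (_ : DecidablePred P),
      (c.toFinset.filter fun v => P v).card =
      (Finset.univ.filter fun i : Fin k => P (c.get i)).card := by
    intro P _
    refine (Finset.card_bij (fun (i : Fin k) _ => c.get i) ?_ ?_ ?_).symm
    · intro i hi
      simp only [Finset.mem_filter, Finset.mem_univ, true_and] at hi
      simp only [Finset.mem_filter, List.mem_toFinset]
      exact ⟨List.get_mem c _, hi⟩
    · intro i _ j _ h
      exact List.nodup_iff_injective_get.mp hcnd h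
    · intro v hv
      simp only [Finset.mem_filter, List.mem_toFinset] at hv
      obtain ⟨hvc, hP⟩ := hv
      obtain ⟨n, hn⟩ := List.mem_iff_get.mp hvc
      refine ⟨n, ?_, hn⟩
      simp only [Finset.mem_filter, Finset.mem_univ, true_and]
      rw [show c.get n = v from hn]
      exact hP
  -- pigeonhole
  set s : ℕ := m - q.length with hsdef
  have hs1 : 1 ≤ s := by omega
  have hs2 : s ≤ k := by omega
  set S : Finset (Fin k) := Finset.univ.filter (fun i => A (c.get i) y1) with hS
  set T : Finset (Fin k) := Finset.univ.filter (fun j => A yr (c.get j)) with hT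
  have hScard : S.card = inDegOn A y1 c.toFinset := by
    simp only [inDegOn]
    exact (hcount (fun v => A v y1) inferInstance).symm
  have hTcard : T.card = outDegOn A yr c.toFinset := by
    simp only [outDegOn]
    exact (hcount (fun v => A yr v) inferInstance).symm
  set d : ℕ := s - 1 with hddef
  set T' : Finset (Fin k) := T.image (fun j => j + (d : Fin k)) with hT'
  have hT'card : T'.card = T.card := Finset.card_image_of_injective _ (add_left_injective _)
  have hsum : k + 1 ≤ S.card + T'.card := by
    rw [hScard, hT'card, hTcard]; exact hd hqne
  have hinter : (S ∩ T').Nonempty := by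
    rw [← Finset.card_pos]
    have h1 := Finset.card_union_add_card_inter S T'
    have h2 : (S ∪ T').card ≤ k := by
      have := Finset.card_le_univ (S ∪ T')
      simpa using this
    omega
  obtain ⟨i, hi⟩ := hinter
  rw [Finset.mem_inter] at hi
  obtain ⟨hiS, hiT'⟩ := hi
  rw [hT', Finset.mem_image] at hiT'
  obtain ⟨j, hjT, hji⟩ := hiT'
  have hjarc : A yr (c.get j) := by
    rw [hT, Finset.mem_filter] at hjT; exact hjT.2
  have hiarc : A (c.get i) y1 := by
    rw [hS, Finset.mem_filter] at hiS; exact hiS.2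
  -- construct the cycle
  set f : ℕ → V := fun t => c.get (j + (t : Fin k)) with hf
  set cp : List V := (List.range s).map f with hcp
  have hcplen : cp.length = s := by simp [hcp]
  have hcpne : cp ≠ [] := List.ne_nil_of_length_pos (by omega)
  refine ⟨cp ++ q, ⟨?_, ?_, ?_, ?_⟩, ?_, ?_⟩
  · simp [hcplen]; omega
  · -- Nodup
    refine List.Nodup.append ?_ hqnd ?_
    · refine List.Nodup.map_on ?_ (List.nodup_range)
      intro t1 ht1 t2 ht2 he
      rw [List.mem_range] at ht1 ht2
      have : j + (t1 : Fin k) = j + (t2 : Fin k) :=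
        List.nodup_iff_injective_get.mp hcnd he
      have h2 : (t1 : Fin k) = (t2 : Fin k) := by
        exact add_left_cancel this
      have := congrArg Fin.val h2
      rwa [Fin.val_cast_of_lt (by omega), Fin.val_cast_of_lt (by omega)] at this
    · intro a ha hq'
      rw [hcp, List.mem_map] at ha
      obtain ⟨t, _, ht⟩ := ha
      exact hdisj a hq' (ht ▸ List.get_mem c _)
  · -- Chain'
    show List.IsChain A (cp ++ q); rw [List.isChain_append]
    refine ⟨?_, hqch, ?_⟩
    · rw [hcp, List.isChain_map, List.isChain_iff_getElem]
      intro t ht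
      simp only [List.length_range] at ht
      rw [List.getElem_range, List.getElem_range]
      have hcast : ((t + 1 : ℕ) : Fin k) = (t : Fin k) + 1 := by push_cast; ring
      have : f (t + 1) = c.get ((j + (t : Fin k)) + 1) := by
        rw [hf]; simp only []
        rw [hcast, add_assoc]
      rw [this]
      exact harc _
    · intro x hx y hy
      rw [List.getLast?_eq_getLast hcpne, Option.mem_some_iff] at hx
      rw [List.head?_eq_head hqne, Option.mem_some_iff] at hy
      subst hx; subst hy
      have hlast : cp.getLast? = some (f d) := by
        rw [hcp, show s = d + 1 by omega, List.range_succ, List.map_append]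
        simp
      rw [List.getLast?_eq_getLast hcpne, Option.some_inj] at hlast
      rw [hlast]
      have : f d = c.get i := by
        rw [hf]; simp only []
        rw [← hji]
      rw [this]
      exact hiarc
  · -- closing arc
    intro h
    have h1 : (cp ++ q).getLast h = yr := by
      rw [List.getLast_append_of_right_ne_nil cp q hqne]
    have h2 : (cp ++ q).head h = c.get j := by
      rw [List.head_append_of_ne_nil hcpne]
      have hh : cp.head? = some (f 0) := by
        obtain ⟨n, hn⟩ : ∃ n, s = n + 1 := ⟨s - 1, by omega⟩
        rw [hcp, hn, List.range_succ_eq_map]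
        simp
      rw [List.head?_eq_head hcpne, Option.some_inj] at hh
      rw [hh, hf]
      simp
    rw [h1, h2]
    exact hjarc
  · simp [hcplen]; omega
  · intro v hv
    simp only [List.toFinset_append, Finset.mem_union, List.mem_toFinset] at hv ⊢
    cases hv with
    | inl h =>
      rw [hcp, List.mem_map] at h
      obtain ⟨t, _, ht⟩ := h
      exact Or.inl (ht ▸ List.get_mem c _)
    | inr h => exact Or.inr h
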